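/- The metaplectic map μ(J₀) = (A⁰ + 1/2)/2, μ(J±) = (A±)²/[2]_{q^{1/2}} defines a representation of U_q(su(1,1)) on the q-oscillator Fock space: [μ(J₀),μ(J±)] = ±μ(J±) and μ(J₋)μ(J₊) − q²·μ(J₊)μ(J₋) = q^{2μ(J₀)}·[2μ(J₀)]_q, where q^{2μ(J₀)}|n⟩ = q^{n+1/2}|n⟩. -/

import Mathlib

noncomputable section

/-- The `k`-mode q-oscillator Fock space: formal complex linear combinations of
occupation-number basis states `|n₁,…,n_k⟩`. -/
abbrev Fock (k : ℕ) := (Fin k → ℕ) →₀ ℂ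

/-- Lowering coefficient `√((1−qᵐ)/(1−q))`. -/
def cf (q : ℝ) (m : ℕ) : ℂ := (Real.sqrt ((1 - q ^ m) / (1 - q)) : ℝ)

/-- Raising operator in mode `i`: `A⁺|n⟩ = √((1−q^{n+1})/(1−q)) |n+1⟩`. -/
def up (q : ℝ) {k : ℕ} (i : Fin k) : Module.End ℂ (Fock k) :=
  Finsupp.lsum ℂ fun n => cf q (n i + 1) • Finsupp.lsingle (Function.update n i (n i + 1))

/-- Lowering operator in mode `i`: `A⁻|n⟩ = √((1−qⁿ)/(1−q)) |n−1⟩` (kills `|0⟩`). -/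
def dn (q : ℝ) {k : ℕ} (i : Fin k) : Module.End ℂ (Fock k) :=
  Finsupp.lsum ℂ fun n => cf q (n i) • Finsupp.lsingle (Function.update n i (n i - 1))

/-- Diagonal operator acting on `|n⟩` by the scalar `d n`. -/
def diag {k : ℕ} (d : (Fin k → ℕ) → ℂ) : Module.End ℂ (Fock k) :=
  Finsupp.lsum ℂ fun n => d n • Finsupp.lsingle n

/-- `q`-exponential of a diagonal operator: acts on `|n⟩` by `q^{E n}` (real power). -/
def qd (q : ℝ) {k : ℕ} (E : (Fin k → ℕ) → ℝ) : Module.End ℂ (Fock k) :=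
  diag fun n => ((q ^ (E n) : ℝ) : ℂ)

/-- Basis state `|n⟩`. -/
def ket {k : ℕ} (n : Fin k → ℕ) : Fock k := Finsupp.single n 1

lemma up_ket (q : ℝ) {k : ℕ} (i : Fin k) (n : Fin k → ℕ) :
    up q i (ket n) = cf q (n i + 1) • ket (Function.update n i (n i + 1)) := by
  simp [up, ket]
lemma dn_ket (q : ℝ) {k : ℕ} (i : Fin k) (n : Fin k → ℕ) :
    dn q i (ket n) = cf q (n i) • ket (Function.update n i (n i - 1)) := by
  simp [dn, ket]
lemma diag_ket {k : ℕ} (d : (Fin k → ℕ) → ℂ) (n : Fin k → ℕ) :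
    diag d (ket n) = d n • ket n := by
  simp [diag, ket]
lemma end_ext {k : ℕ} {f g : Module.End ℂ (Fock k)}
    (h : ∀ n, f (ket n) = g (ket n)) : f = g := by
  apply Finsupp.lhom_ext
  intro a b
  have : (Finsupp.single a b : Fock k) = b • ket a := by
    simp [ket, Finsupp.smul_single]
  rw [this, map_smul, map_smul, h]


lemma cf_sq (q : ℝ) (hq0 : 0 < q) (hq1 : q < 1) (j : ℕ) :
    cf q j ^ 2 = (((1 - q ^ j) / (1 - q) : ℝ) : ℂ) := by
  have h : (0:ℝ) ≤ (1 - q ^ j) / (1 - q) :=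
    div_nonneg (by nlinarith [pow_le_one₀ hq0.le hq1.le (n := j)]) (by linarith)
  rw [cf, ← Complex.ofReal_pow, Real.sq_sqrt h]

lemma rpow_half_cast (q : ℝ) (hq0 : 0 < q) (j : ℕ) :
    q ^ ((j : ℝ) + 1/2) = q ^ j * q ^ ((1:ℝ)/2) := by
  rw [Real.rpow_add hq0, Real.rpow_natCast]

lemma rpow_neg_half_cast (q : ℝ) (hq0 : 0 < q) (j : ℕ) :
    q ^ (-((j : ℝ) + 1/2)) = (q ^ j * q ^ ((1:ℝ)/2))⁻¹ := by
  rw [Real.rpow_neg hq0.le, rpow_half_cast q hq0]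

lemma rpow_neg_half (q : ℝ) (hq0 : 0 < q) :
    q ^ (-(1:ℝ)/2) = (q ^ ((1:ℝ)/2))⁻¹ := by
  rw [show (-(1:ℝ)/2) = -((1:ℝ)/2) by ring, Real.rpow_neg hq0.le]

lemma s_mul_s (q : ℝ) (hq0 : 0 < q) : q ^ ((1:ℝ)/2) * q ^ ((1:ℝ)/2) = q := by
  rw [← Real.rpow_add hq0]; norm_num

set_option maxHeartbeats 1000000 in
/-- the metaplectic map `μ(J₀)=(A⁰+1/2)/2`, `μ(J±)=(A±)²/[2]_{q^{1/2}}`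
defines a representation of U_q(su(1,1)): `[μ(J₀),μ(J±)]=±μ(J±)` and
`μ(J₋)μ(J₊) − q²μ(J₊)μ(J₋) = q^{2μ(J₀)}[2μ(J₀)]_q`, where `q^{2μ(J₀)}|n⟩=q^{n+1/2}|n⟩`. -/
theorem stmt6 (q : ℝ) (hq0 : 0 < q) (hq1 : q < 1) :
    let J0 : Module.End ℂ (Fock 1) := diag fun n => ((((n 0 : ℝ) + 1/2) / 2 : ℝ) : ℂ)
    let Jp : Module.End ℂ (Fock 1) :=
      (((q ^ ((1:ℝ)/2) + q ^ (-(1:ℝ)/2))⁻¹ : ℝ) : ℂ) • (up q 0 ^ 2)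
    let Jm : Module.End ℂ (Fock 1) :=
      (((q ^ ((1:ℝ)/2) + q ^ (-(1:ℝ)/2))⁻¹ : ℝ) : ℂ) • (dn q 0 ^ 2)
    -- q^{2J₀} acts by q^{n+1/2}; [2J₀]_q acts by (q^{n+1/2}−q^{−(n+1/2)})/(q−q⁻¹)
    let q2J0 : Module.End ℂ (Fock 1) := qd q (fun n => (n 0 : ℝ) + 1/2)
    let bk : Module.End ℂ (Fock 1) :=
      ((q - q⁻¹ : ℝ)⁻¹ : ℂ) •
        (qd q (fun n => (n 0 : ℝ) + 1/2) - qd q (fun n => -((n 0 : ℝ) + 1/2)))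
    J0 * Jp - Jp * J0 = Jp ∧
    J0 * Jm - Jm * J0 = -Jm ∧
    Jm * Jp - ((q^2 : ℝ) : ℂ) • (Jp * Jm) = q2J0 * bk := by
  intro J0 Jp Jm q2J0 bk
  refine ⟨?_, ?_, ?_⟩
  · apply end_ext
    intro n
    simp only [J0, Jp, LinearMap.sub_apply, Module.End.mul_apply, LinearMap.smul_apply,
      pow_two, up_ket, diag_ket, map_smul, smul_smul, Function.update_self, Function.update_idem]
    match_scalars
    push_cast
    ring
  · apply end_ext
    intro n
    have hcf0 : cf q 0 = 0 := by simp [cf]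
    rcases e : n 0 with _ | _ | m <;>
    simp only [J0, Jm, LinearMap.sub_apply, Module.End.mul_apply, LinearMap.smul_apply,
      LinearMap.neg_apply, pow_two, dn_ket, diag_ket, map_smul, smul_smul, e,
      Function.update_self, Function.update_idem, hcf0] <;>
    match_scalars <;> push_cast <;> ring
  · apply end_ext
    intro n
    have hcf0 : cf q 0 = 0 := by simp [cf]
    have hn : Function.update n 0 (n 0) = n := Function.update_eq_self 0 n
    have hs0 : (0:ℝ) < q ^ ((1:ℝ)/2) := Real.rpow_pos_of_pos hq0 _
    set S : ℂ := ((q ^ ((1:ℝ)/2) : ℝ) : ℂ) with hSdef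
    have hS : S * S = (q : ℂ) := by rw [hSdef, ← Complex.ofReal_mul, s_mul_s q hq0]
    have hSne : S ≠ 0 := by simp [hSdef, Complex.ofReal_ne_zero]; positivity
    have hqC : (q:ℂ) ≠ 0 := by exact_mod_cast hq0.ne'
    have h1q : (1:ℂ) - q ≠ 0 := by
      rw [show ((1:ℂ) - q) = ((1 - q : ℝ) : ℂ) by push_cast; ring]
      exact Complex.ofReal_ne_zero.mpr (by linarith)
    have hqi : (q:ℂ) - (q:ℂ)⁻¹ ≠ 0 := by
      rw [show ((q:ℂ) - (q:ℂ)⁻¹) = ((q - q⁻¹ : ℝ) : ℂ) by push_cast; ring]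
      refine Complex.ofReal_ne_zero.mpr ?_
      have : 1 < q⁻¹ := (one_lt_inv₀ hq0).mpr hq1
      intro h; nlinarith
    have hSS : S + S⁻¹ ≠ 0 := by
      rw [show S + S⁻¹ = (((q ^ ((1:ℝ)/2) + (q ^ ((1:ℝ)/2))⁻¹ : ℝ)) : ℂ) by push_cast [hSdef]; ring]
      exact Complex.ofReal_ne_zero.mpr (by positivity)
    have hq1C : S * S + 1 ≠ 0 := by
      rw [hS, show ((q:ℂ)+1) = ((q+1:ℝ):ℂ) by push_cast; ring]
      exact Complex.ofReal_ne_zero.mpr (by positivity)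
    have hq2 : (q:ℂ) * q - 1 ≠ 0 := by
      rw [show ((q:ℂ) * q - 1) = ((q*q - 1 : ℝ) : ℂ) by push_cast; ring]
      exact Complex.ofReal_ne_zero.mpr (by nlinarith)
    rcases e : n 0 with _ | _ | m <;> rw [e] at hn <;>
    simp only [Jp, Jm, q2J0, bk, qd, LinearMap.sub_apply, Module.End.mul_apply,
      LinearMap.smul_apply, pow_two, dn_ket, up_ket, diag_ket, map_smul, map_sub, smul_smul, e,
      Function.update_self, Function.update_idem, hcf0, smul_sub, Nat.add_sub_cancel, hn] <;>
    match_scalars <;> try ring1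
    · -- n 0 = 0
      rw [show q ^ ((0:ℝ) + 1/2) = q ^ (0:ℕ) * q ^ ((1:ℝ)/2) by
          rw [show ((0:ℝ) + 1/2) = ((0:ℕ):ℝ) + 1/2 by norm_num, rpow_half_cast q hq0],
        show q ^ (-((0:ℝ) + 1/2)) = (q ^ (0:ℕ) * q ^ ((1:ℝ)/2))⁻¹ by
          rw [show (-((0:ℝ) + 1/2)) = -(((0:ℕ):ℝ) + 1/2) by norm_num, rpow_neg_half_cast q hq0],
        rpow_neg_half q hq0]
      ring_nf
      simp only [cf_sq q hq0 hq1]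
      push_cast
      field_simp [hq1C, hq2]
      rw [← hS]
      have h1 : (1 + S^2*2 + S^4 : ℂ) ≠ 0 := by
        rw [show (1 + S^2*2 + S^4 : ℂ) = (S*S+1)^2 by ring]; exact pow_ne_zero _ hq1C
      have h2 : (-1 + S^4 : ℂ) ≠ 0 := by
        rw [show (-1 + S^4 : ℂ) = (S*S)*(S*S)-1 by ring, hS]; exact hq2
      rw [← hSdef]
      ring_nf
      field_simp
      ring
    · -- n 0 = 1
      rw [show q ^ ((0:ℝ) + 1 + 1/2) = q ^ (1:ℕ) * q ^ ((1:ℝ)/2) by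
          rw [show ((0:ℝ) + 1 + 1/2) = ((1:ℕ):ℝ) + 1/2 by norm_num, rpow_half_cast q hq0],
        show q ^ (-((0:ℝ) + 1 + 1/2)) = (q ^ (1:ℕ) * q ^ ((1:ℝ)/2))⁻¹ by
          rw [show (-((0:ℝ) + 1 + 1/2)) = -(((1:ℕ):ℝ) + 1/2) by norm_num, rpow_neg_half_cast q hq0],
        rpow_neg_half q hq0]
      ring_nf
      simp only [cf_sq q hq0 hq1]
      push_cast
      field_simp [hq1C, hq2]
      rw [← hS]
      have h1 : (1 + S^2*2 + S^4 : ℂ) ≠ 0 := by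
        rw [show (1 + S^2*2 + S^4 : ℂ) = (S*S+1)^2 by ring]; exact pow_ne_zero _ hq1C
      have h2 : (-1 + S^4 : ℂ) ≠ 0 := by
        rw [show (-1 + S^4 : ℂ) = (S*S)*(S*S)-1 by ring, hS]; exact hq2
      rw [← hSdef]
      ring_nf
      field_simp
      ring
    · -- n 0 = m + 2
      rw [show q ^ ((m:ℝ) + 1 + 1 + 1/2) = q ^ (m+2:ℕ) * q ^ ((1:ℝ)/2) by
          rw [show ((m:ℝ) + 1 + 1 + 1/2) = ((m+2:ℕ):ℝ) + 1/2 by push_cast; ring, rpow_half_cast q hq0],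
        show q ^ (-((m:ℝ) + 1 + 1 + 1/2)) = (q ^ (m+2:ℕ) * q ^ ((1:ℝ)/2))⁻¹ by
          rw [show (-((m:ℝ) + 1 + 1 + 1/2)) = -(((m+2:ℕ):ℝ) + 1/2) by push_cast; ring, rpow_neg_half_cast q hq0],
        rpow_neg_half q hq0]
      ring_nf
      simp only [cf_sq q hq0 hq1]
      push_cast
      have hD : ((q:ℂ)*q - 1) * (S * (q:ℂ)^2 * (q:ℂ)^m) ≠ 0 :=
        mul_ne_zero hq2 (mul_ne_zero (mul_ne_zero hSne (pow_ne_zero _ hqC)) (pow_ne_zero _ hqC))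
      field_simp [hq1C, hq2, hD, pow_ne_zero m hqC]
      rw [← hS]
      have h1 : (1 + S^2*2 + S^4 : ℂ) ≠ 0 := by
        rw [show (1 + S^2*2 + S^4 : ℂ) = (S*S+1)^2 by ring]; exact pow_ne_zero _ hq1C
      have h2 : (-1 + S^4 : ℂ) ≠ 0 := by
        rw [show (-1 + S^4 : ℂ) = (S*S)*(S*S)-1 by ring, hS]; exact hq2
      rw [← hSdef]
      ring_nf
      simp only [inv_pow]
      field_simp
      ring
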